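/- Let w ∈ C²([0,1]) satisfy -w'' + w^p = γ w on (0,1), w > 0 on (0,1), w(0) = w(1) = 0, with p > 1, γ > 0, q > 0, k = max w. Then the q-th power of the L^q norm satisfies ∫₀¹ w(x)^q dx = (2 k^q / √γ) ∫₀¹ s^q / sqrt( (1 - s²) - (2/(p+1)) (k^{p-1}/γ)(1 - s^{p+1}) ) ds. -/

import Mathlib

open Set Filter Topology MeasureTheory

private lemma eq_endpoints_of_deriv_zero {f : ℝ → ℝ} {a b : ℝ} (hab : a ≤ b)
    (hc : ContinuousOn f (Icc a b)) (hd : ∀ x ∈ Ioo a b, HasDerivAt f 0 x) : f a = f b := by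
  have hdiff : DifferentiableOn ℝ f (interior (Icc a b)) := by
    rw [interior_Icc]
    exact fun x hx => ((hd x hx).differentiableAt).differentiableWithinAt
  have hder : ∀ x ∈ interior (Icc a b), deriv f x = 0 := by
    rw [interior_Icc]; exact fun x hx => (hd x hx).deriv
  have hmono : MonotoneOn f (Icc a b) :=
    monotoneOn_of_deriv_nonneg (convex_Icc a b) hc hdiff (fun x hx => (hder x hx).ge)
  have hanti : AntitoneOn f (Icc a b) :=
    antitoneOn_of_deriv_nonpos (convex_Icc a b) hc hdiff (fun x hx => (hder x hx).le)
  exact le_antisymm (hmono ⟨le_rfl, hab⟩ ⟨hab, le_rfl⟩ hab)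
    (hanti ⟨le_rfl, hab⟩ ⟨hab, le_rfl⟩ hab)

private lemma bernoulli_aux {p s : ℝ} (hp : 1 ≤ p) (hs : -1 ≤ s - 1) :
    1 - s ^ (p+1) ≤ (p+1) * (1 - s) := by
  have h := one_add_mul_self_le_rpow_one_add hs (by linarith : (1:ℝ) ≤ p + 1)
  have : (1 + (s - 1)) = s := by ring
  rw [this] at h
  nlinarith [h]

private lemma pos_of_continuousOn_ne {f : ℝ → ℝ} {x c : ℝ}
    (hc : ContinuousOn f (Set.uIcc x c)) (hne : ∀ y ∈ Set.uIcc x c, f y ≠ 0)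
    (hpos : 0 < f c) : 0 < f x := by
  by_contra h
  push_neg at h
  have h0 : (0:ℝ) ∈ Set.uIcc (f x) (f c) := Set.mem_uIcc.2 (Or.inl ⟨h, hpos.le⟩)
  obtain ⟨y, hy, hy0⟩ := intermediate_value_uIcc hc h0
  exact hne y hy hy0

set_option maxHeartbeats 1000000 in
/-- Time-map representation of the q-th power of the L^q norm of a positive
    logistic solution. -/
theorem stmt_4 (p γ q : ℝ) (hp : 1 < p) (hγ : 0 < γ) (hq : 0 < q)
    (w : ℝ → ℝ) (hw : ContDiffOn ℝ 2 w (Icc 0 1))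
    (heq : ∀ x ∈ Ioo (0:ℝ) 1, -(deriv (deriv w) x) + w x ^ p = γ * w x)
    (hpos : ∀ x ∈ Ioo (0:ℝ) 1, 0 < w x)
    (hb0 : w 0 = 0) (hb1 : w 1 = 0)
    (k : ℝ) (hk : k = w (1/2)) (hmax : ∀ x ∈ Icc (0:ℝ) 1, w x ≤ k) :
    ∫ x in (0:ℝ)..1, w x ^ q
      = (2 * k ^ q / Real.sqrt γ) *
        ∫ s in (0:ℝ)..1,
          s ^ q / Real.sqrt ((1 - s ^ 2) - (2/(p+1)) * (k ^ (p-1) / γ) * (1 - s ^ (p+1))) := by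
  have half_mem : (1/2 : ℝ) ∈ Ioo (0:ℝ) 1 := by norm_num
  have k0 : 0 < k := hk ▸ hpos _ half_mem
  have hcont : ContinuousOn w (Icc 0 1) := hw.continuousOn
  have hwo : ContDiffOn ℝ 2 w (Ioo 0 1) := hw.mono Ioo_subset_Icc_self
  have hwd1 : ContDiffOn ℝ 1 (deriv w) (Ioo 0 1) := by
    have := hwo.deriv_of_isOpen isOpen_Ioo (m := 1) (by norm_num)
    exact this
  have hwdiff : ∀ x ∈ Ioo (0:ℝ) 1, DifferentiableAt ℝ w x := fun x hx =>
    (hwo.contDiffAt (isOpen_Ioo.mem_nhds hx)).differentiableAt (by norm_num)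
  have hD : ∀ x ∈ Ioo (0:ℝ) 1, DifferentiableAt ℝ (deriv w) x := fun x hx =>
    (hwd1.contDiffAt (isOpen_Ioo.mem_nhds hx)).differentiableAt (by norm_num)
  have hdcont : ContinuousOn (deriv w) (Ioo 0 1) := fun x hx =>
    ((hD x hx).continuousAt).continuousWithinAt
  -- second derivative from the equation
  have hww : ∀ x ∈ Ioo (0:ℝ) 1, deriv (deriv w) x = w x ^ p - γ * w x := by
    intro x hx; have := heq x hx; linarith
  -- derivative of w at 1/2 is zero
  have hd0 : deriv w (1/2) = 0 := by
    have hloc : IsLocalMax w (1/2) := by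
      filter_upwards [Icc_mem_nhds (by norm_num : (0:ℝ) < 1/2) (by norm_num : (1/2:ℝ) < 1)]
        with y hy
      exact (hmax y hy).trans_eq hk
    exact hloc.deriv_eq_zero
  -- energy function
  set gg : ℝ → ℝ := fun t => γ * t^2 - (2/(p+1)) * t ^ (p+1) with hgg
  have hp1 : (0:ℝ) < p + 1 := by linarith
  have hEd : ∀ x ∈ Ioo (0:ℝ) 1,
      HasDerivAt (fun y => (deriv w y)^2 + gg (w y)) 0 x := by
    intro x hx
    have h1 : HasDerivAt w (deriv w x) x := (hwdiff x hx).hasDerivAt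
    have h2 : HasDerivAt (deriv w) (w x ^ p - γ * w x) x := by
      have := (hD x hx).hasDerivAt
      rwa [hww x hx] at this
    have h3 : HasDerivAt (fun y => (deriv w y)^2) (2 * deriv w x * (w x ^ p - γ * w x)) x := by
      have := h2.pow 2
      simpa [Pi.pow_def, mul_comm, mul_assoc, mul_left_comm] using this
    have h4 : HasDerivAt (fun y => w y ^ (p+1)) ((p+1) * w x ^ p * deriv w x) x := by
      have hr := (Real.hasDerivAt_rpow_const (x := w x) (p := p+1)
        (Or.inr (by linarith))).comp x h1
      have hexp : p + 1 - 1 = p := by ring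
      simpa [Function.comp_def, hexp, mul_comm, mul_assoc, mul_left_comm] using hr
    have h5 : HasDerivAt (fun y => gg (w y))
        (γ * (2 * w x * deriv w x) - (2/(p+1)) * ((p+1) * w x ^ p * deriv w x)) x := by
      have h6 : HasDerivAt (fun y => (w y)^2) (2 * w x * deriv w x) x := by
        have := h1.pow 2
        simpa [Pi.pow_def, mul_comm, mul_assoc, mul_left_comm] using this
      simpa [Pi.sub_def, hgg] using ((h6.const_mul γ).sub (h4.const_mul (2/(p+1))))
    have := h3.add h5
    have hval : 2 * deriv w x * (w x ^ p - γ * w x) +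
        (γ * (2 * w x * deriv w x) - (2/(p+1)) * ((p+1) * w x ^ p * deriv w x)) = 0 := by
      field_simp
      ring
    rwa [hval] at this
  -- energy identity
  have henergy : ∀ x ∈ Ioo (0:ℝ) 1, (deriv w x)^2 = gg k - gg (w x) := by
    intro x hx
    have hsub : ∀ y z : ℝ, y ∈ Ioo (0:ℝ) 1 → z ∈ Ioo (0:ℝ) 1 → y ≤ z →
        (deriv w y)^2 + gg (w y) = (deriv w z)^2 + gg (w z) := by
      intro y z hy hz hyz
      refine eq_endpoints_of_deriv_zero (f := fun t => (deriv w t)^2 + gg (w t)) hyz ?_ ?_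
      · intro t ht
        have ht' : t ∈ Ioo (0:ℝ) 1 := ⟨lt_of_lt_of_le hy.1 ht.1, lt_of_le_of_lt ht.2 hz.2⟩
        exact ((hEd t ht').differentiableAt).continuousAt.continuousWithinAt
      · intro t ht
        have ht' : t ∈ Ioo (0:ℝ) 1 := ⟨hy.1.trans ht.1, ht.2.trans hz.2⟩
        exact hEd t ht'
    have key : (deriv w x)^2 + gg (w x) = (deriv w (1/2))^2 + gg (w (1/2)) := by
      rcases le_total x (1/2) with h | h
      · exact hsub x (1/2) hx half_mem h
      · exact (hsub (1/2) x half_mem hx h).symm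
    rw [hd0, ← hk] at key
    have : (0:ℝ)^2 = 0 := by norm_num
    rw [this, zero_add] at key
    linarith

  -- values are attained on [0,1/2]
  have hsurj : ∀ t ∈ Icc (0:ℝ) k, ∃ x ∈ Icc (0:ℝ) (1/2), w x = t := by
    intro t ht
    have hiv := intermediate_value_Icc (by norm_num : (0:ℝ) ≤ 1/2)
      (hcont.mono (Icc_subset_Icc le_rfl (by norm_num)))
    rw [hb0, ← hk] at hiv
    obtain ⟨x, hx, hxt⟩ := hiv ht
    exact ⟨x, hx, hxt⟩
  have hgle : ∀ t ∈ Ioo (0:ℝ) k, gg t ≤ gg k := by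
    intro t ht
    obtain ⟨x, hx, hxt⟩ := hsurj t ⟨ht.1.le, ht.2.le⟩
    have hx0 : x ≠ 0 := by rintro rfl; rw [hb0] at hxt; exact ht.1.ne hxt
    have hxh : x ≠ 1/2 := by rintro rfl; rw [← hk] at hxt; exact ht.2.ne hxt.symm
    have hx' : x ∈ Ioo (0:ℝ) 1 :=
      ⟨lt_of_le_of_ne hx.1 (Ne.symm hx0), lt_of_le_of_lt (lt_of_le_of_ne hx.2 hxh).le (by norm_num)⟩
    have := henergy x hx'
    rw [hxt] at this
    nlinarith [sq_nonneg (deriv w x)]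
  have hpm1 : (0:ℝ) < p - 1 := by linarith
  -- continuity of gg on nonneg reals
  have hggcont : ∀ s : Set ℝ, (∀ t ∈ s, (0:ℝ) ≤ t) → ContinuousOn gg s := by
    intro s hs
    apply ContinuousOn.sub (continuousOn_const.mul (continuousOn_pow 2))
    exact continuousOn_const.mul (continuousOn_id.rpow_const (fun t ht => Or.inr hp1.le))
  -- derivative of gg
  have hggd : ∀ t : ℝ, 0 < t → HasDerivAt gg (2 * t * (γ - t ^ (p-1))) t := by
    intro t ht
    have h1 : HasDerivAt (fun y : ℝ => y^2) (2*t) t := by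
      simpa using (hasDerivAt_pow 2 t)
    have h2 : HasDerivAt (fun y : ℝ => y ^ (p+1)) ((p+1) * t ^ p) t := by
      have := Real.hasDerivAt_rpow_const (x := t) (p := p+1) (Or.inl ht.ne')
      have hexp : p + 1 - 1 = p := by ring
      rwa [hexp] at this
    have h3 := (h1.const_mul γ).sub (h2.const_mul (2/(p+1)))
    have hval : γ * (2*t) - (2/(p+1)) * ((p+1) * t ^ p) = 2 * t * (γ - t ^ (p-1)) := by
      have htp : t ^ p = t * t ^ (p-1) := by
        have h0 := Real.rpow_add ht 1 (p-1)
        rw [Real.rpow_one] at h0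
        have h1 : (1:ℝ) + (p-1) = p := by ring
        rwa [h1] at h0
      rw [htp]
      field_simp
    rwa [hval] at h3
  -- k ^ (p-1) ≤ γ
  have hk1 : k ^ (p-1) ≤ γ := by
    by_contra hcon
    push_neg at hcon
    set t0 : ℝ := γ ^ (p-1)⁻¹ with ht0
    have ht0p : 0 < t0 := Real.rpow_pos_of_pos hγ _
    have ht0γ : t0 ^ (p-1) = γ := Real.rpow_inv_rpow hγ.le hpm1.ne'
    have ht0k : t0 < k := by
      by_contra hge
      push_neg at hge
      have := Real.rpow_le_rpow k0.le hge hpm1.le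
      rw [ht0γ] at this
      linarith
    have hanti : StrictAntiOn gg (Icc t0 k) := by
      apply strictAntiOn_of_deriv_neg (convex_Icc _ _)
        (hggcont _ (fun t ht => (ht0p.trans_le ht.1).le))
      intro t ht
      rw [interior_Icc] at ht
      rw [(hggd t (ht0p.trans ht.1)).deriv]
      have : γ < t ^ (p-1) := by
        calc γ = t0 ^ (p-1) := ht0γ.symm
        _ < t ^ (p-1) := Real.rpow_lt_rpow ht0p.le ht.1 hpm1
      nlinarith [ht0p.trans ht.1]
    have hlt := hanti ⟨le_rfl, ht0k.le⟩ ⟨ht0k.le, le_rfl⟩ ht0k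
    exact absurd (hgle t0 ⟨ht0p, ht0k⟩) (not_le_of_gt hlt)
  -- gg strictly monotone on [0,k]
  have hgmono : StrictMonoOn gg (Icc 0 k) := by
    apply strictMonoOn_of_deriv_pos (convex_Icc _ _) (hggcont _ (fun t ht => ht.1))
    intro t ht
    rw [interior_Icc] at ht
    rw [(hggd t ht.1).deriv]
    have : t ^ (p-1) < γ :=
      lt_of_lt_of_le (Real.rpow_lt_rpow ht.1.le ht.2 hpm1) hk1
    nlinarith [ht.1]
  have hG : ∀ t ∈ Ico (0:ℝ) k, 0 < gg k - gg t := by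
    intro t ht
    have := hgmono ⟨ht.1, ht.2.le⟩ ⟨k0.le, le_rfl⟩ ht.2
    linarith
  -- set of maximum points
  set S : Set ℝ := Icc (0:ℝ) 1 ∩ w ⁻¹' {k} with hSdef
  have hScl : IsClosed S :=
    hcont.preimage_isClosed_of_isClosed isClosed_Icc isClosed_singleton
  have hShalf : (1/2:ℝ) ∈ S := ⟨⟨by norm_num, by norm_num⟩, show w (1/2) = k from hk.symm⟩
  have hSne : S.Nonempty := ⟨1/2, hShalf⟩
  have hSbdb : BddBelow S := ⟨0, fun x hx => hx.1.1⟩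
  have hSbda : BddAbove S := ⟨1, fun x hx => hx.1.2⟩
  have hSmem : ∀ x ∈ S, w x = k := fun x hx => hx.2
  set a := sInf S with hadef
  have haS : a ∈ S := hScl.csInf_mem hSne hSbdb
  have hwa : w a = k := haS.2
  have hahalf : a ≤ 1/2 := csInf_le hSbdb hShalf
  have ha0 : 0 < a := by
    rcases lt_or_eq_of_le haS.1.1 with h | h
    · exact h
    · exfalso; rw [← h, hb0] at hwa; exact k0.ne hwa
  have ha1 : a < 1 := lt_of_le_of_lt hahalf (by norm_num)
  have hbelow : ∀ x, 0 < x → x < a → w x < k := by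
    intro x hx0 hxa
    have hxS : x ∉ S := notMem_of_lt_csInf hxa hSbdb
    have hxI : x ∈ Icc (0:ℝ) 1 := ⟨hx0.le, (hxa.trans ha1).le⟩
    rcases lt_or_eq_of_le (hmax x hxI) with h | h
    · exact h
    · exact absurd ⟨hxI, h⟩ hxS
  have hIooa : ∀ x ∈ Ioo (0:ℝ) a, x ∈ Ioo (0:ℝ) 1 := fun x hx => ⟨hx.1, hx.2.trans ha1⟩
  -- derivative nonzero and positive on (0,a)
  have hne0a : ∀ x ∈ Ioo (0:ℝ) a, deriv w x ≠ 0 := by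
    intro x hx h0
    have hx1 := hIooa x hx
    have hen := henergy x hx1
    have hGx := hG (w x) ⟨(hpos x hx1).le, hbelow x hx.1 hx.2⟩
    rw [h0] at hen
    nlinarith
  have hslopea : ∃ c ∈ Ioo (0:ℝ) a, deriv w c = (w a - w 0) / (a - 0) := by
    apply exists_deriv_eq_slope w ha0 (hcont.mono (Icc_subset_Icc le_rfl ha1.le))
    exact fun x hx => ((hwdiff x (hIooa x hx)).differentiableWithinAt)
  have hda : ∀ x ∈ Ioo (0:ℝ) a, 0 < deriv w x := by
    obtain ⟨c, hc, hceq⟩ := hslopea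
    intro x hx
    apply pos_of_continuousOn_ne (c := c)
    · exact hdcont.mono ((Set.ordConnected_Ioo.uIcc_subset hx hc).trans
        (fun y hy => hIooa y hy))
    · exact fun y hy => hne0a y (Set.ordConnected_Ioo.uIcc_subset hx hc hy)
    · rw [hceq, hwa, hb0]
      rw [sub_zero, sub_zero]
      positivity
  -- exclude the degenerate case k ^ (p-1) = γ
  have hkne : k ^ (p-1) ≠ γ := by
    intro heqγ
    set B : ℝ := (k/2) ^ (p-2) + k ^ (p-2) with hB
    have hBpos : 0 < B := add_pos (Real.rpow_pos_of_pos (by linarith) _)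
      (Real.rpow_pos_of_pos k0 _)
    set L : ℝ := (p-1) * B with hL
    have hLpos : 0 < L := mul_pos hpm1 hBpos
    have hdb : ∀ d ∈ Icc (k/2) k, d ^ (p-2) ≤ B := by
      intro d hd
      have hd0 : 0 < d := lt_of_lt_of_le (by linarith : (0:ℝ) < k/2) hd.1
      rcases le_or_gt 0 (p-2) with hp2 | hp2
      · have h1 : d ^ (p-2) ≤ k ^ (p-2) := Real.rpow_le_rpow hd0.le hd.2 hp2
        have h2 : 0 < (k/2) ^ (p-2) := Real.rpow_pos_of_pos (by linarith) _
        rw [hB]; linarith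
      · have h1 : d ^ (p-2) ≤ (k/2) ^ (p-2) :=
          Real.rpow_le_rpow_of_nonpos (by linarith) hd.1 hp2.le
        have h2 : 0 < k ^ (p-2) := Real.rpow_pos_of_pos k0 _
        rw [hB]; linarith
    have hGb : ∀ t ∈ Ico (k/2) k, gg k - gg t ≤ (2*k*L) * (k - t)^2 := by
      intro t ht
      have ht0 : 0 < t := lt_of_lt_of_le (by linarith : (0:ℝ) < k/2) ht.1
      obtain ⟨c, hc, hceq⟩ := exists_hasDerivAt_eq_slope gg
        (fun s => 2*s*(γ - s ^ (p-1))) ht.2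
        (hggcont _ (fun y hy => (ht0.trans_le hy.1).le))
        (fun s hs => hggd s (ht0.trans hs.1))
      obtain ⟨d, hd, hdeq⟩ := exists_hasDerivAt_eq_slope (fun y : ℝ => y ^ (p-1))
        (fun y => (p-1) * y ^ (p-2)) hc.2
        ((continuousOn_id.rpow_const (fun y hy =>
          Or.inl (ne_of_gt (lt_of_lt_of_le (ht0.trans hc.1) hy.1)))))
        (fun s hs => by
          have := Real.hasDerivAt_rpow_const (x := s) (p := p-1)
            (Or.inl (ne_of_gt ((ht0.trans hc.1).trans hs.1)))
          have hexp : p - 1 - 1 = p - 2 := by ring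
          rwa [hexp] at this)
      have hdk : d ∈ Icc (k/2) k := ⟨le_trans ht.1 (le_trans hc.1.le hd.1.le), hd.2.le⟩
      have hdbd := hdb d hdk
      have hkc : (0:ℝ) < k - c := by linarith [hc.2]
      have hkt : (0:ℝ) < k - t := by linarith [ht.2]
      have hΔ : k ^ (p-1) - c ^ (p-1) = (p-1) * d ^ (p-2) * (k - c) := by
        field_simp at hdeq
        linarith [hdeq]
      have hΔnn : 0 ≤ k ^ (p-1) - c ^ (p-1) := by
        have := Real.rpow_le_rpow (ht0.trans hc.1).le hc.2.le hpm1.le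
        linarith
      have hgeq : gg k - gg t = 2*c*(γ - c ^ (p-1)) * (k - t) := by
        field_simp at hceq
        linarith [hceq]
      rw [hgeq, ← heqγ]
      have hstep : k ^ (p-1) - c ^ (p-1) ≤ L * (k - t) := by
        rw [hΔ, hL]
        have h1 : (p-1) * d ^ (p-2) ≤ (p-1) * B := by
          apply mul_le_mul_of_nonneg_left hdbd hpm1.le
        have h2 : k - c ≤ k - t := by linarith [hc.1]
        nlinarith [Real.rpow_pos_of_pos (lt_of_lt_of_le (by linarith : (0:ℝ) < k/2) hdk.1) (p-2)]
      have hc0 : 0 < c := ht0.trans hc.1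
      have hck : c ≤ k := hc.2.le
      have e1 : c*(k ^ (p-1) - c ^ (p-1)) ≤ k*(k ^ (p-1) - c ^ (p-1)) :=
        mul_le_mul_of_nonneg_right hck hΔnn
      have e2 : (k ^ (p-1) - c ^ (p-1))*(k-t) ≤ (L*(k-t))*(k-t) :=
        mul_le_mul_of_nonneg_right hstep hkt.le
      nlinarith [e1, e2, hkt.le, k0.le, hΔnn]
    -- pick a point with value 3k/4
    have hiv := intermediate_value_Icc ha0.le (hcont.mono (Icc_subset_Icc le_rfl ha1.le))
    rw [hb0, hwa] at hiv
    obtain ⟨x₀, hx₀, hwx₀⟩ := hiv (⟨by linarith, by linarith⟩ : (3/4)*k ∈ Icc 0 k)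
    have hx₀0 : x₀ ≠ 0 := by
      rintro rfl; rw [hb0] at hwx₀; nlinarith
    have hx₀a : x₀ ≠ a := by
      rintro rfl; rw [hwa] at hwx₀; nlinarith
    have hx₀I : x₀ ∈ Ioo (0:ℝ) a :=
      ⟨lt_of_le_of_ne hx₀.1 (Ne.symm hx₀0), lt_of_le_of_ne hx₀.2 hx₀a⟩
    have hwmono : MonotoneOn w (Icc x₀ a) := by
      apply monotoneOn_of_deriv_nonneg (convex_Icc _ _)
        (hcont.mono (Icc_subset_Icc hx₀.1 ha1.le))
      · rw [interior_Icc]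
        exact fun x hx => (hwdiff x (hIooa x ⟨hx₀I.1.trans hx.1, hx.2⟩)).differentiableWithinAt
      · rw [interior_Icc]
        exact fun x hx => (hda x ⟨hx₀I.1.trans hx.1, hx.2⟩).le
    set M : ℝ := Real.sqrt (2*k*L) with hM
    have hM0 : 0 ≤ M := Real.sqrt_nonneg _
    set ψ : ℝ → ℝ := fun y => (k - w y) * Real.exp (M*y) with hψ
    have hψd : ∀ x ∈ Ioo x₀ a, HasDerivAt ψ
        ((-(deriv w x) + M*(k - w x)) * Real.exp (M*x)) x := by
      intro x hx
      have hx1 : x ∈ Ioo (0:ℝ) 1 := hIooa x ⟨hx₀I.1.trans hx.1, hx.2⟩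
      have h1 : HasDerivAt (fun y => k - w y) (-(deriv w x)) x := by
        simpa [Pi.sub_def] using (hasDerivAt_const x k).sub (hwdiff x hx1).hasDerivAt
      have h2 : HasDerivAt (fun y => Real.exp (M*y)) (Real.exp (M*x) * M) x := by
        have := (Real.hasDerivAt_exp (M*x)).comp x ((hasDerivAt_id x).const_mul M)
        simpa [Function.comp_def, mul_one] using this
      have := h1.mul h2
      have hval : -(deriv w x) * Real.exp (M*x) + (k - w x) * (Real.exp (M*x) * M)
          = (-(deriv w x) + M*(k - w x)) * Real.exp (M*x) := by ring
      rwa [hval] at this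
    have hψnn : ∀ x ∈ Ioo x₀ a, 0 ≤ (-(deriv w x) + M*(k - w x)) * Real.exp (M*x) := by
      intro x hx
      have hxI : x ∈ Ioo (0:ℝ) a := ⟨hx₀I.1.trans hx.1, hx.2⟩
      have hx1 : x ∈ Ioo (0:ℝ) 1 := hIooa x hxI
      have hge : (3/4)*k ≤ w x := by
        rw [← hwx₀]
        exact hwmono ⟨le_rfl, hx₀I.2.le⟩ ⟨hx.1.le, hx.2.le⟩ hx.1.le
      have hltk : w x < k := hbelow x hxI.1 hxI.2
      have hen := henergy x hx1
      have hb := hGb (w x) ⟨by linarith, hltk⟩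
      have hsq : (M*(k - w x))^2 = (2*k*L)*(k - w x)^2 := by
        rw [mul_pow, Real.sq_sqrt (by nlinarith : (0:ℝ) ≤ 2*k*L)]
      have h1 : (deriv w x)^2 ≤ (M*(k - w x))^2 := by rw [hsq]; linarith
      have h2 : deriv w x ≤ M*(k - w x) := by
        by_contra hcon
        push_neg at hcon
        have hMk : 0 ≤ M*(k - w x) := mul_nonneg hM0 (by linarith)
        nlinarith
      exact mul_nonneg (by linarith) (Real.exp_pos _).le
    have hψmono : MonotoneOn ψ (Icc x₀ a) := by
      apply monotoneOn_of_deriv_nonneg (convex_Icc _ _)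
      · apply ContinuousOn.mul
        · exact continuousOn_const.sub (hcont.mono (Icc_subset_Icc hx₀.1 ha1.le))
        · exact (Real.continuous_exp.comp (continuous_const.mul continuous_id)).continuousOn
      · rw [interior_Icc]
        exact fun x hx => ((hψd x hx).differentiableAt).differentiableWithinAt
      · rw [interior_Icc]
        intro x hx
        rw [(hψd x hx).deriv]
        exact hψnn x hx
    have hfin := hψmono ⟨le_rfl, hx₀I.2.le⟩ ⟨hx₀I.2.le, le_rfl⟩ hx₀I.2.le
    rw [hψ] at hfin
    simp only [hwa, hwx₀, sub_self, zero_mul] at hfin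
    nlinarith [Real.exp_pos (M*x₀), hfin]
  have hkγ : k ^ (p-1) < γ := lt_of_le_of_ne hk1 hkne
  -- two distinct maximum points lead to a contradiction
  have hflat : ∀ u v : ℝ, u ∈ Icc (0:ℝ) 1 → v ∈ Icc (0:ℝ) 1 → u < v →
      w u = k → w v = k → False := by
    intro u v hu hv huv hwu hwv
    obtain ⟨z, hz, hzmin⟩ := (isCompact_Icc (a := u) (b := v)).exists_isMinOn
      (nonempty_Icc.2 huv.le) (hcont.mono (Icc_subset_Icc hu.1 hv.2))
    have hzI01 : z ∈ Icc (0:ℝ) 1 := ⟨hu.1.trans hz.1, hz.2.trans hv.2⟩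
    rcases lt_or_eq_of_le (hmax z hzI01) with hzk | hzk
    · have hzu : z ≠ u := by rintro rfl; rw [hwu] at hzk; exact hzk.ne rfl
      have hzv : z ≠ v := by rintro rfl; rw [hwv] at hzk; exact hzk.ne rfl
      have hzI : z ∈ Ioo u v := ⟨lt_of_le_of_ne hz.1 (Ne.symm hzu), lt_of_le_of_ne hz.2 hzv⟩
      have hz1 : z ∈ Ioo (0:ℝ) 1 :=
        ⟨lt_of_le_of_lt hu.1 hzI.1, lt_of_lt_of_le hzI.2 hv.2⟩
      have hdz : deriv w z = 0 :=
        (hzmin.isLocalMin (Icc_mem_nhds hzI.1 hzI.2)).deriv_eq_zero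
      have hen := henergy z hz1
      have hGz := hG (w z) ⟨(hpos z hz1).le, hzk⟩
      rw [hdz] at hen
      nlinarith
    · have hconst : ∀ y ∈ Icc u v, w y = k := by
        intro y hy
        refine le_antisymm (hmax y ⟨hu.1.trans hy.1, hy.2.trans hv.2⟩) ?_
        rw [← hzk]
        exact hzmin hy
      set z₀ := (u+v)/2 with hz₀def
      have hz₀ : z₀ ∈ Ioo u v := ⟨by rw [hz₀def]; linarith, by rw [hz₀def]; linarith⟩
      have hnb : Ioo u v ∈ 𝓝 z₀ := isOpen_Ioo.mem_nhds hz₀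
      have hdev : ∀ y ∈ Ioo u v, deriv w y = 0 := by
        intro y hy
        have hev : w =ᶠ[𝓝 y] fun _ => k :=
          Filter.eventuallyEq_of_mem (isOpen_Ioo.mem_nhds hy)
            (fun y' hy' => hconst y' (Ioo_subset_Icc_self hy'))
        rw [hev.deriv_eq]
        exact deriv_const y k
      have hdev2 : deriv (deriv w) z₀ = 0 := by
        have hev : deriv w =ᶠ[𝓝 z₀] fun _ => 0 :=
          Filter.eventuallyEq_of_mem hnb (fun y hy => hdev y hy)
        rw [hev.deriv_eq]
        exact deriv_const _ _
      have hz₀1 : z₀ ∈ Ioo (0:ℝ) 1 :=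
        ⟨lt_of_le_of_lt hu.1 hz₀.1, lt_of_lt_of_le hz₀.2 hv.2⟩
      have hkp := heq z₀ hz₀1
      rw [hdev2, hconst z₀ (Ioo_subset_Icc_self hz₀), neg_zero, zero_add] at hkp
      have hkpp : k ^ p = k * k ^ (p-1) := by
        have h0 := Real.rpow_add k0 1 (p-1)
        rw [Real.rpow_one] at h0
        have h1 : (1:ℝ) + (p-1) = p := by ring
        rwa [h1] at h0
      rw [hkpp] at hkp
      have hcancel : k * k ^ (p-1) = k * γ := by linarith [hkp]
      exact hkne (mul_left_cancel₀ k0.ne' hcancel)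
  have hahalf' : a = 1/2 := by
    rcases lt_or_eq_of_le hahalf with h | h
    · exact (hflat a (1/2) ⟨ha0.le, ha1.le⟩ ⟨by norm_num, by norm_num⟩ h hwa hk.symm).elim
    · exact h
  set b := sSup S with hbdef
  have hbS : b ∈ S := hScl.csSup_mem hSne hSbda
  have hwb : w b = k := hbS.2
  have hbhalf : 1/2 ≤ b := le_csSup hSbda hShalf
  have hb0' : 0 < b := lt_of_lt_of_le (by norm_num) hbhalf
  have hb1' : b < 1 := by
    rcases lt_or_eq_of_le hbS.1.2 with h | h
    · exact h
    · exfalso; rw [h, hb1] at hwb; exact k0.ne hwb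
  have hbhalf' : b = 1/2 := by
    rcases lt_or_eq_of_le hbhalf with h | h
    · exact (hflat (1/2) b ⟨by norm_num, by norm_num⟩ ⟨hb0'.le, hb1'.le⟩ h hk.symm hwb).elim
    · exact h.symm
  have hlt : ∀ x ∈ Ioo (0:ℝ) 1, x ≠ 1/2 → w x < k := by
    intro x hx hxh
    have hxI : x ∈ Icc (0:ℝ) 1 := ⟨hx.1.le, hx.2.le⟩
    rcases lt_or_gt_of_ne hxh with h | h
    · exact hbelow x hx.1 (by rw [hahalf']; exact h)
    · have hxS : x ∉ S := notMem_of_csSup_lt (by rw [← hbdef, hbhalf']; exact h) hSbda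
      rcases lt_or_eq_of_le (hmax x hxI) with h' | h'
      · exact h'
      · exact absurd ⟨hxI, h'⟩ hxS
  have hd1 : ∀ x ∈ Ioo (0:ℝ) (1/2), 0 < deriv w x := by
    intro x hx
    exact hda x (by rw [hahalf']; exact hx)
  have hd2 : ∀ x ∈ Ioo (1/2:ℝ) 1, deriv w x < 0 := by
    have hne0b : ∀ x ∈ Ioo (1/2:ℝ) 1, deriv w x ≠ 0 := by
      intro x hx h0
      have hx1 : x ∈ Ioo (0:ℝ) 1 := ⟨lt_trans (by norm_num) hx.1, hx.2⟩
      have hen := henergy x hx1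
      have hGx := hG (w x) ⟨(hpos x hx1).le, hlt x hx1 (ne_of_gt hx.1)⟩
      rw [h0] at hen
      nlinarith
    have hslopeb : ∃ c ∈ Ioo (1/2:ℝ) 1, deriv w c = (w 1 - w (1/2)) / (1 - 1/2) := by
      apply exists_deriv_eq_slope w (by norm_num) (hcont.mono (Icc_subset_Icc (by norm_num) le_rfl))
      exact fun x hx => (hwdiff x ⟨lt_trans (by norm_num) hx.1, hx.2⟩).differentiableWithinAt
    obtain ⟨c, hc, hceq⟩ := hslopeb
    intro x hx
    have hsub : uIcc x c ⊆ Ioo (1/2:ℝ) 1 := Set.ordConnected_Ioo.uIcc_subset hx hc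
    have hsub1 : uIcc x c ⊆ Ioo (0:ℝ) 1 :=
      hsub.trans (fun y hy => ⟨lt_trans (by norm_num) hy.1, hy.2⟩)
    have hpos' : 0 < -(deriv w x) := by
      apply pos_of_continuousOn_ne (f := fun y => -(deriv w y)) (c := c)
      · exact (hdcont.mono hsub1).neg
      · exact fun y hy => neg_ne_zero.2 (hne0b y (hsub hy))
      · rw [hceq, hb1, ← hk]
        have h2 : (0 - k) / (1 - 1/2 : ℝ) = -(2*k) := by ring
        rw [h2, neg_neg]
        linarith
    linarith
  -- ### the time-map integrand
  have hsγ : 0 < Real.sqrt γ := Real.sqrt_pos.2 hγ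
  have hr0 : 0 < k ^ (p-1) / γ := div_pos (Real.rpow_pos_of_pos k0 _) hγ
  have hr1 : k ^ (p-1) / γ < 1 := (div_lt_one hγ).2 hkγ
  set r : ℝ := k ^ (p-1) / γ with hrdef
  set H : ℝ → ℝ := fun s => (1 - s ^ 2) - (2/(p+1)) * (k ^ (p-1) / γ) * (1 - s ^ (p+1))
    with hHdef
  set f : ℝ → ℝ := fun s => s ^ q / Real.sqrt (H s) with hfdef
  have hk2 : k ^ (p-1) * k^2 = k ^ (p+1) := by
    rw [← Real.rpow_natCast k 2, ← Real.rpow_add k0]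
    congr 1
    push_cast
    ring
  have hHg : ∀ s : ℝ, 0 ≤ s → γ * k^2 * H s = gg k - gg (k*s) := by
    intro s hs
    have e1 : (k*s) ^ (p+1) = k ^ (p+1) * s ^ (p+1) := Real.mul_rpow k0.le hs
    simp only [hHdef, hgg]
    rw [e1, ← hk2]
    field_simp
    ring
  have hγk2 : 0 < γ * k^2 := by positivity
  have hHpos : ∀ s ∈ Ico (0:ℝ) 1, 0 < H s := by
    intro s hs
    have hks : k * s ∈ Ico (0:ℝ) k := ⟨mul_nonneg k0.le hs.1, by nlinarith [hs.2]⟩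
    have h1 := hG _ hks
    have h2 := hHg s hs.1
    nlinarith
  have hH1 : H 1 = 0 := by
    simp only [hHdef, Real.one_rpow]
    norm_num
  -- global continuity of the relevant rpow maps
  have hcq : Continuous (fun s : ℝ => s ^ q) := continuous_iff_continuousAt.2
    (fun s => Real.continuousAt_rpow_const s q (Or.inr hq.le))
  have hcp1 : Continuous (fun s : ℝ => s ^ (p+1)) := continuous_iff_continuousAt.2
    (fun s => Real.continuousAt_rpow_const s (p+1) (Or.inr hp1.le))
  have hHcont : Continuous H := by
    apply Continuous.sub
    · exact continuous_const.sub (continuous_pow 2)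
    · exact continuous_const.mul (continuous_const.sub hcp1)
  have hfmeas : Measurable f :=
    hcq.measurable.div (Real.continuous_sqrt.comp hHcont).measurable
  have hfcont : ContinuousOn f (Ico 0 1) := by
    apply ContinuousOn.div hcq.continuousOn
      (Real.continuous_sqrt.comp hHcont).continuousOn
    exact fun s hs => (Real.sqrt_pos.2 (hHpos s hs)).ne'
  -- integrability of f on [0,1]
  have hfint : IntervalIntegrable f volume 0 1 := by
    have hfi1 : IntervalIntegrable f volume 0 r := by
      apply ContinuousOn.intervalIntegrable
      rw [uIcc_of_le hr0.le]
      exact hfcont.mono (fun s hs => ⟨hs.1, lt_of_le_of_lt hs.2 hr1⟩)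
    have hfi2 : IntervalIntegrable f volume r 1 := by
      have hmaj : IntervalIntegrable
          (fun s => (1-s) ^ (-(1/2) : ℝ) / Real.sqrt (1-r)) volume r 1 := by
        have h0 : IntervalIntegrable (fun s : ℝ => s ^ (-(1/2):ℝ)) volume (1-r) 0 :=
          intervalIntegral.intervalIntegrable_rpow' (by norm_num)
        have h1 := h0.comp_sub_left 1
        simp only [sub_sub_cancel, sub_zero] at h1
        exact h1.div_const _
      apply hmaj.mono_fun hfmeas.aestronglyMeasurable
      rw [Filter.EventuallyLE, MeasureTheory.ae_restrict_iff' measurableSet_uIoc]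
      apply MeasureTheory.ae_of_all
      intro s hs
      rw [Set.uIoc_of_le hr1.le] at hs
      rcases eq_or_lt_of_le hs.2 with h1 | h1
      · have : f s = 0 := by
          rw [hfdef, h1]
          simp [hH1]
        rw [this]
        simp only [norm_zero]
        exact norm_nonneg _
      · have hs0 : 0 < s := hr0.trans hs.1
        have hs1 : 0 < 1 - s := by linarith
        have hr1' : 0 < 1 - r := by linarith
        have hsq : s ^ q ≤ 1 := Real.rpow_le_one hs0.le (by linarith) hq.le
        have hHl : (1-r)*(1-s) ≤ H s := by
          have hb := bernoulli_aux hp.le (by linarith : (-1:ℝ) ≤ s - 1)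
          have hcstnn : (0:ℝ) ≤ (2/(p+1)) * (k ^ (p-1)/γ) := by positivity
          have h2 : (2/(p+1)) * (k ^ (p-1)/γ) * (1 - s ^ (p+1))
              ≤ (2/(p+1)) * (k ^ (p-1)/γ) * ((p+1)*(1-s)) :=
            mul_le_mul_of_nonneg_left hb hcstnn
          have h3 : (2/(p+1)) * (k ^ (p-1)/γ) * ((p+1)*(1-s)) = 2*r*(1-s) := by
            rw [hrdef]
            field_simp
          simp only [hHdef]
          rw [h3] at h2
          nlinarith [hs.1]
        have hd0 : 0 < Real.sqrt ((1-r)*(1-s)) := Real.sqrt_pos.2 (by positivity)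
        have hd1' : Real.sqrt ((1-r)*(1-s)) ≤ Real.sqrt (H s) := Real.sqrt_le_sqrt hHl
        have hfs : f s ≤ 1 / Real.sqrt ((1-r)*(1-s)) := by
          rw [hfdef]
          exact div_le_div₀ (by norm_num) hsq hd0 hd1'
        have hrhs : (1-s) ^ (-(1/2) : ℝ) / Real.sqrt (1-r)
            = 1 / Real.sqrt ((1-r)*(1-s)) := by
          rw [Real.sqrt_mul hr1'.le, Real.rpow_neg hs1.le, ← Real.sqrt_eq_rpow]
          rw [one_div, mul_inv, mul_comm]
          rw [div_eq_mul_inv]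
        have hfnn : 0 ≤ f s := by
          rw [hfdef]
          positivity
        rw [Real.norm_eq_abs, Real.norm_eq_abs, abs_of_nonneg hfnn, hrhs,
          abs_of_nonneg (by positivity)]
        exact hfs
    exact hfi1.trans hfi2
  -- the primitive F
  set F : ℝ → ℝ := fun y => ∫ s in (0:ℝ)..y, f s with hFdef
  have hFcont : ContinuousOn F (Icc 0 1) := by
    have := intervalIntegral.continuousOn_primitive_interval' hfint
      (by rw [uIcc_of_le (by norm_num : (0:ℝ) ≤ 1)]; exact ⟨le_rfl, by norm_num⟩)
    rwa [uIcc_of_le (by norm_num : (0:ℝ) ≤ 1)] at this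
  have hfopen : ContinuousOn f (Ioo 0 1) := hfcont.mono Ioo_subset_Ico_self
  have hFd : ∀ y ∈ Ioo (0:ℝ) 1, HasDerivAt F (f y) y := by
    intro y hy
    apply intervalIntegral.integral_hasDerivAt_right
    · apply hfint.mono_set
      rw [uIcc_of_le hy.1.le, uIcc_of_le (by norm_num : (0:ℝ) ≤ 1)]
      exact Icc_subset_Icc le_rfl hy.2.le
    · exact hfopen.stronglyMeasurableAtFilter isOpen_Ioo y hy
    · exact hfopen.continuousAt (isOpen_Ioo.mem_nhds hy)
  -- primitives of w^q
  have hwqcont : ContinuousOn (fun t => w t ^ q) (Icc 0 1) :=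
    hcont.rpow_const (fun t ht => Or.inr hq.le)
  have hwqint : IntervalIntegrable (fun t => w t ^ q) volume 0 1 := by
    apply ContinuousOn.intervalIntegrable
    rwa [uIcc_of_le (by norm_num : (0:ℝ) ≤ 1)]
  have hwqint1 : IntervalIntegrable (fun t => w t ^ q) volume 0 (1/2) := by
    apply hwqint.mono_set
    rw [uIcc_of_le (by norm_num : (0:ℝ) ≤ 1/2), uIcc_of_le (by norm_num : (0:ℝ) ≤ 1)]
    exact Icc_subset_Icc le_rfl (by norm_num)
  have hwqint2 : IntervalIntegrable (fun t => w t ^ q) volume (1/2) 1 := by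
    apply hwqint.mono_set
    rw [uIcc_of_le (by norm_num : (1/2:ℝ) ≤ 1), uIcc_of_le (by norm_num : (0:ℝ) ≤ 1)]
    exact Icc_subset_Icc (by norm_num) le_rfl
  set G1 : ℝ → ℝ := fun x => ∫ t in (0:ℝ)..x, w t ^ q with hG1def
  set G2 : ℝ → ℝ := fun x => ∫ t in x..(1:ℝ), w t ^ q with hG2def
  have hG1cont : ContinuousOn G1 (Icc 0 1) := by
    have := intervalIntegral.continuousOn_primitive_interval' hwqint
      (by rw [uIcc_of_le (by norm_num : (0:ℝ) ≤ 1)]; exact ⟨le_rfl, by norm_num⟩)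
    rwa [uIcc_of_le (by norm_num : (0:ℝ) ≤ 1)] at this
  have hG2cont : ContinuousOn G2 (Icc 0 1) := by
    have h0 : IntegrableOn (fun t => w t ^ q) (uIcc 0 1) volume := by
      rw [uIcc_of_le (by norm_num : (0:ℝ) ≤ 1)]
      exact hwqcont.integrableOn_Icc
    have := intervalIntegral.continuousOn_primitive_interval_left h0
    rwa [uIcc_of_le (by norm_num : (0:ℝ) ≤ 1)] at this
  have hwqopen : ContinuousOn (fun t => w t ^ q) (Ioo 0 1) :=
    hwqcont.mono Ioo_subset_Icc_self
  have hG1d : ∀ x ∈ Ioo (0:ℝ) 1, HasDerivAt G1 (w x ^ q) x := by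
    intro x hx
    apply intervalIntegral.integral_hasDerivAt_right
    · apply hwqint.mono_set
      rw [uIcc_of_le hx.1.le, uIcc_of_le (by norm_num : (0:ℝ) ≤ 1)]
      exact Icc_subset_Icc le_rfl hx.2.le
    · exact hwqopen.stronglyMeasurableAtFilter isOpen_Ioo x hx
    · exact hwqopen.continuousAt (isOpen_Ioo.mem_nhds hx)
  have hG2d : ∀ x ∈ Ioo (0:ℝ) 1, HasDerivAt G2 (-(w x ^ q)) x := by
    intro x hx
    apply intervalIntegral.integral_hasDerivAt_left
    · apply hwqint.mono_set
      rw [uIcc_of_le hx.2.le, uIcc_of_le (by norm_num : (0:ℝ) ≤ 1)]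
      exact Icc_subset_Icc hx.1.le le_rfl
    · exact hwqopen.stronglyMeasurableAtFilter isOpen_Ioo x hx
    · exact hwqopen.continuousAt (isOpen_Ioo.mem_nhds hx)
  have hwnn : ∀ x ∈ Icc (0:ℝ) 1, 0 ≤ w x := by
    intro x hx
    rcases eq_or_lt_of_le hx.1 with h | h
    · rw [← h, hb0]
    · rcases eq_or_lt_of_le hx.2 with h2 | h2
      · rw [h2, hb1]
      · exact (hpos x ⟨h, h2⟩).le
  set CC : ℝ := k ^ q / Real.sqrt γ with hCCdef
  have hkq : 0 < k ^ q := Real.rpow_pos_of_pos k0 _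
  set Φ : ℝ → ℝ := fun x => F (w x / k) with hΦdef
  have hΦcont : ContinuousOn Φ (Icc 0 1) := by
    have hmaps : MapsTo (fun x => w x / k) (Icc 0 1) (Icc 0 1) := fun x hx =>
      ⟨div_nonneg (hwnn x hx) k0.le, (div_le_one k0).2 (hmax x hx)⟩
    exact hFcont.comp (hcont.div_const k) hmaps
  have hΦd : ∀ x ∈ Ioo (0:ℝ) 1, x ≠ 1/2 →
      HasDerivAt Φ (f (w x / k) * (deriv w x / k)) x := by
    intro x hx hxh
    have hy : w x / k ∈ Ioo (0:ℝ) 1 :=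
      ⟨div_pos (hpos x hx) k0, (div_lt_one k0).2 (hlt x hx hxh)⟩
    exact (hFd _ hy).comp x ((hwdiff x hx).hasDerivAt.div_const k)
  -- the value of the derivative on each half
  have hsqrtH : ∀ x ∈ Ioo (0:ℝ) 1, x ≠ 1/2 →
      H (w x / k) = (deriv w x)^2 / (γ * k^2) := by
    intro x hx hxh
    have h2 := hHg (w x / k) (div_nonneg ((hpos x hx).le) k0.le)
    have h3 : k * (w x / k) = w x := by field_simp
    rw [h3] at h2
    have h4 := henergy x hx
    rw [← h4] at h2
    field_simp
    linarith
  have hkm : 0 < k * Real.sqrt γ := mul_pos k0 hsγ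
  have hsqrtpos : ∀ x ∈ Ioo (0:ℝ) (1/2),
      Real.sqrt (H (w x / k)) = deriv w x / (k * Real.sqrt γ) := by
    intro x hx
    have hx1 : x ∈ Ioo (0:ℝ) 1 := ⟨hx.1, hx.2.trans (by norm_num)⟩
    have hd := hd1 x hx
    rw [hsqrtH x hx1 (ne_of_lt hx.2)]
    rw [show (deriv w x)^2 / (γ * k^2) = (deriv w x / (k * Real.sqrt γ))^2 by
      rw [div_pow, mul_pow, Real.sq_sqrt hγ.le]; ring_nf]
    exact Real.sqrt_sq (div_nonneg hd.le hkm.le)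
  have hsqrtneg : ∀ x ∈ Ioo (1/2:ℝ) 1,
      Real.sqrt (H (w x / k)) = -(deriv w x) / (k * Real.sqrt γ) := by
    intro x hx
    have hx1 : x ∈ Ioo (0:ℝ) 1 := ⟨lt_trans (by norm_num) hx.1, hx.2⟩
    have hd := hd2 x hx
    rw [hsqrtH x hx1 (ne_of_gt hx.1)]
    rw [show (deriv w x)^2 / (γ * k^2) = (-(deriv w x) / (k * Real.sqrt γ))^2 by
      rw [div_pow, mul_pow, Real.sq_sqrt hγ.le]; ring_nf]
    exact Real.sqrt_sq (div_nonneg (by linarith) hkm.le)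
  have hwq_div : ∀ x ∈ Ioo (0:ℝ) 1, (w x / k) ^ q = w x ^ q / k ^ q := fun x hx =>
    Real.div_rpow (hpos x hx).le k0.le q
  -- left half
  have hΨ1 : ∀ x ∈ Ioo (0:ℝ) (1/2), HasDerivAt (fun y => G1 y - CC * Φ y) 0 x := by
    intro x hx
    have hx1 : x ∈ Ioo (0:ℝ) 1 := ⟨hx.1, hx.2.trans (by norm_num)⟩
    have h1 := hG1d x hx1
    have h2 := (hΦd x hx1 (ne_of_lt hx.2)).const_mul CC
    have h3 := h1.sub h2
    have hdx : deriv w x ≠ 0 := (hd1 x hx).ne'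
    have hval : w x ^ q - CC * (f (w x / k) * (deriv w x / k)) = 0 := by
      simp only [hfdef]
      rw [hsqrtpos x hx, hwq_div x hx1, hCCdef]
      field_simp
      ring
    rwa [hval] at h3
  have hleft : G1 (1/2) = CC * F 1 := by
    have hcΨ : ContinuousOn (fun y => G1 y - CC * Φ y) (Icc 0 (1/2)) :=
      (hG1cont.mono (Icc_subset_Icc le_rfl (by norm_num))).sub
        (continuousOn_const.mul (hΦcont.mono (Icc_subset_Icc le_rfl (by norm_num))))
    have he := eq_endpoints_of_deriv_zero (f := fun y => G1 y - CC * Φ y)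
      (by norm_num : (0:ℝ) ≤ 1/2) hcΨ hΨ1
    have e0 : G1 0 = 0 := intervalIntegral.integral_same
    have e1 : Φ 0 = 0 := by
      show F (w 0 / k) = 0
      rw [hb0, zero_div]
      exact intervalIntegral.integral_same
    have e2 : Φ (1/2) = F 1 := by
      show F (w (1/2) / k) = F 1
      rw [← hk, div_self k0.ne']
    simp only [e0, e1, e2, mul_zero, sub_zero, zero_sub] at he
    linarith [he]
  -- right half
  have hΨ2 : ∀ x ∈ Ioo (1/2:ℝ) 1, HasDerivAt (fun y => G2 y - CC * Φ y) 0 x := by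
    intro x hx
    have hx1 : x ∈ Ioo (0:ℝ) 1 := ⟨lt_trans (by norm_num) hx.1, hx.2⟩
    have h1 := hG2d x hx1
    have h2 := (hΦd x hx1 (ne_of_gt hx.1)).const_mul CC
    have h3 := h1.sub h2
    have hdx : deriv w x ≠ 0 := (hd2 x hx).ne
    have hval : -(w x ^ q) - CC * (f (w x / k) * (deriv w x / k)) = 0 := by
      simp only [hfdef]
      rw [hsqrtneg x hx, hwq_div x hx1, hCCdef]
      field_simp
      ring
    rwa [hval] at h3
  have hright : G2 (1/2) = CC * F 1 := by
    have hcΨ : ContinuousOn (fun y => G2 y - CC * Φ y) (Icc (1/2) 1) :=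
      (hG2cont.mono (Icc_subset_Icc (by norm_num) le_rfl)).sub
        (continuousOn_const.mul (hΦcont.mono (Icc_subset_Icc (by norm_num) le_rfl)))
    have he := eq_endpoints_of_deriv_zero (f := fun y => G2 y - CC * Φ y)
      (by norm_num : (1/2:ℝ) ≤ 1) hcΨ hΨ2
    have e0 : G2 1 = 0 := intervalIntegral.integral_same
    have e1 : Φ 1 = 0 := by
      show F (w 1 / k) = 0
      rw [hb1, zero_div]
      exact intervalIntegral.integral_same
    have e2 : Φ (1/2) = F 1 := by
      show F (w (1/2) / k) = F 1
      rw [← hk, div_self k0.ne']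
    simp only [e0, e1, e2, mul_zero, sub_zero, zero_sub] at he
    linarith [he]
  -- conclusion
  have hadd := intervalIntegral.integral_add_adjacent_intervals hwqint1 hwqint2
  have hfinal : (∫ x in (0:ℝ)..1, w x ^ q) = (2 * k ^ q / Real.sqrt γ) * F 1 := by
    rw [← hadd]
    have : (∫ t in (0:ℝ)..(1/2:ℝ), w t ^ q) = G1 (1/2) := rfl
    rw [this]
    have h2' : (∫ t in (1/2:ℝ)..(1:ℝ), w t ^ q) = G2 (1/2) := rfl
    rw [h2']
    rw [hleft, hright, hCCdef]
    ring
  exact hfinal
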